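/- Let ‖·‖ be an orthogonally invariant matrix norm on ℝ^{m×n} with dual ‖·‖_*, and f : ℝ^{m×n} → ℝ continuously differentiable, bounded below by f_min, with gradients L-Lipschitz with respect to ‖·‖. Consider preconditioned spectral descent iterates X_{k+1} = X_k − α_k ⟨G_k, D_k⟩ D_k where at each iteration k the stochastic mapping is p_k(σ) = E_k/‖diag(E_k)‖, with the entries of E_k ∈ ℝ^r i.i.d. samples of a fixed probability distribution supported on (0, ∞), drawn independently across iterations and independently of the algorithmic history. Then with constant step size α_k = η/L for any η ∈ (0, 2), almost surely there is a finite random constant C such that for all K ≥ 1, min_{0 ≤ k < K} ‖G_k‖_*² ≤ C/K. -/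

import Mathlib

open scoped Matrix
open Filter MeasureTheory

attribute [local instance] Matrix.normedAddCommGroup Matrix.normedSpace

/-- The Frobenius (trace) inner product `⟨A, B⟩ = tr(AᵀB) = ∑ᵢⱼ Aᵢⱼ Bᵢⱼ`. -/
def frobInner {m n : ℕ} (A B : Matrix (Fin m) (Fin n) ℝ) : ℝ :=
  ∑ i, ∑ j, A i j * B i j

/-- The `m × n` rectangular diagonal matrix with the entries of `σ ∈ ℝ^{min m n}` on the
diagonal. -/
def rectDiag (m n : ℕ) (σ : Fin (Nat.min m n) → ℝ) : Matrix (Fin m) (Fin n) ℝ :=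
  Matrix.of fun i j =>
    if h : (i : ℕ) = (j : ℕ) ∧ (i : ℕ) < Nat.min m n then σ ⟨i, h.2⟩ else 0

/-- The dual norm `‖V‖_* = sup {⟨U, V⟩ : N U ≤ 1}` of a norm `N` on `ℝ^{m×n}`. -/
noncomputable def dualNorm {m n : ℕ} (N : Matrix (Fin m) (Fin n) ℝ → ℝ)
    (V : Matrix (Fin m) (Fin n) ℝ) : ℝ :=
  sSup ((fun U => frobInner U V) '' {U | N U ≤ 1})

namespace KaonAux
set_option linter.unusedSectionVars false


variable {m n : ℕ}

lemma frobInner_comm (A B : Matrix (Fin m) (Fin n) ℝ) : frobInner A B = frobInner B A := by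
  simp [frobInner, mul_comm]

lemma frobInner_eq_trace (A B : Matrix (Fin m) (Fin n) ℝ) :
    frobInner A B = Matrix.trace (Aᵀ * B) := by
  simp only [Matrix.trace, Matrix.diag, Matrix.mul_apply, Matrix.transpose_apply, frobInner]
  rw [Finset.sum_comm]

lemma frobInner_conj {U : Matrix (Fin m) (Fin m) ℝ} {V : Matrix (Fin n) (Fin n) ℝ}
    (hU : U * Uᵀ = 1) (hV : V * Vᵀ = 1) (A B : Matrix (Fin m) (Fin n) ℝ) :
    frobInner (U * A * Vᵀ) (U * B * Vᵀ) = frobInner A B := by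
  have hU' : Uᵀ * U = 1 := mul_eq_one_comm.mp hU
  have hV' : Vᵀ * V = 1 := mul_eq_one_comm.mp hV
  rw [frobInner_eq_trace, frobInner_eq_trace]
  have h1 : (U * A * Vᵀ)ᵀ * (U * B * Vᵀ) = V * (Aᵀ * B) * Vᵀ := by
    rw [Matrix.transpose_mul, Matrix.transpose_mul, Matrix.transpose_transpose]
    calc V * (Aᵀ * Uᵀ) * (U * B * Vᵀ) = V * (Aᵀ * (Uᵀ * U) * B) * Vᵀ := by
          simp only [Matrix.mul_assoc]
      _ = V * (Aᵀ * B) * Vᵀ := by rw [hU', Matrix.mul_one]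
  rw [h1, Matrix.trace_mul_comm (V * (Aᵀ * B)) Vᵀ, ← Matrix.mul_assoc, hV', Matrix.one_mul]

lemma frobInner_smul_right (c : ℝ) (A B : Matrix (Fin m) (Fin n) ℝ) :
    frobInner A (c • B) = c * frobInner A B := by
  simp [frobInner, Finset.mul_sum]; ring_nf
  exact Finset.sum_congr rfl fun i _ => Finset.sum_congr rfl fun j _ => by ring

lemma frobInner_smul_left (c : ℝ) (A B : Matrix (Fin m) (Fin n) ℝ) :
    frobInner (c • A) B = c * frobInner A B := by
  rw [frobInner_comm, frobInner_smul_right, frobInner_comm]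

lemma frobInner_sub_left (A B C : Matrix (Fin m) (Fin n) ℝ) :
    frobInner (A - B) C = frobInner A C - frobInner B C := by
  simp [frobInner, sub_mul, Finset.sum_sub_distrib]

lemma frobInner_zero_left (B : Matrix (Fin m) (Fin n) ℝ) : frobInner 0 B = 0 := by
  simp [frobInner]



lemma rectDiag_smul (c : ℝ) (σ : Fin (Nat.min m n) → ℝ) :
    rectDiag m n (fun i => c * σ i) = c • rectDiag m n σ := by
  ext i j
  simp only [rectDiag, Matrix.of_apply, Matrix.smul_apply, smul_eq_mul]
  split <;> simp

lemma rectDiag_apply_cast (σ : Fin (Nat.min m n) → ℝ) (i : Fin (Nat.min m n)) :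
    rectDiag m n σ (Fin.castLE (Nat.min_le_left m n) i) (Fin.castLE (Nat.min_le_right m n) i)
      = σ i := by
  simp only [rectDiag, Matrix.of_apply]
  split
  · next h => exact congrArg σ (Fin.ext (by simp))
  · next h => exact absurd ⟨rfl, by simpa using i.isLt⟩ h

lemma frobInner_rectDiag (A : Matrix (Fin m) (Fin n) ℝ) (σ : Fin (Nat.min m n) → ℝ) :
    frobInner A (rectDiag m n σ) = ∑ i : Fin (Nat.min m n),
      A (Fin.castLE (Nat.min_le_left m n) i) (Fin.castLE (Nat.min_le_right m n) i) * σ i := by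
  have hmn_m := Nat.min_le_left m n
  have hmn_n := Nat.min_le_right m n
  have inner : ∀ i : Fin m, (∑ j, A i j * rectDiag m n σ i j) =
      if h : (i : ℕ) < Nat.min m n
      then A i ⟨i, lt_of_lt_of_le h hmn_n⟩ * σ ⟨i, h⟩ else 0 := by
    intro i
    by_cases h : (i : ℕ) < Nat.min m n
    · rw [dif_pos h]
      rw [Finset.sum_eq_single (⟨(i : ℕ), lt_of_lt_of_le h hmn_n⟩ : Fin n)]
      · congr 1
        simp only [rectDiag, Matrix.of_apply]
        split
        · next h' => rfl
        · next h' => exact absurd ⟨by simp, h⟩ h'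
      · intro j _ hj
        have hne : ¬((i : ℕ) = (j : ℕ) ∧ (i : ℕ) < Nat.min m n) := by
          rintro ⟨h1, -⟩
          exact hj (by ext; exact h1.symm)
        simp only [rectDiag, Matrix.of_apply, dif_neg hne, mul_zero]
      · intro h'; exact absurd (Finset.mem_univ _) h'
    · rw [dif_neg h]
      refine Finset.sum_eq_zero fun j _ => ?_
      have hne : ¬((i : ℕ) = (j : ℕ) ∧ (i : ℕ) < Nat.min m n) := fun hc => h hc.2
      simp only [rectDiag, Matrix.of_apply, dif_neg hne, mul_zero]
  rw [frobInner]
  simp only [inner]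
  rw [← Finset.sum_subset (Finset.subset_univ
      ((Finset.univ : Finset (Fin (Nat.min m n))).map (Fin.castLEEmb hmn_m)))
      ?_]
  · rw [Finset.sum_map]
    refine Finset.sum_congr rfl fun k _ => ?_
    rw [dif_pos (by simpa using k.isLt)]
    rfl
  · intro i _ hi
    rw [dif_neg]
    intro h
    exact hi (Finset.mem_map.mpr ⟨⟨(i : ℕ), h⟩, Finset.mem_univ _, Fin.ext rfl⟩)

variable {N : Matrix (Fin m) (Fin n) ℝ → ℝ}
  (hN_add : ∀ A B, N (A + B) ≤ N A + N B)
  (hN_smul : ∀ (c : ℝ) A, N (c • A) = |c| * N A)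
  (hN_def : ∀ A, N A = 0 ↔ A = 0)

section NormFacts
include hN_smul

lemma N_zero : N 0 = 0 := by
  have := hN_smul 0 0
  simpa using this

include hN_add

lemma N_nonneg (A : Matrix (Fin m) (Fin n) ℝ) : 0 ≤ N A := by
  have h1 : N (-A) = N A := by simpa using hN_smul (-1) A
  have h2 := hN_add A (-A)
  rw [add_neg_cancel, N_zero hN_smul, h1] at h2
  linarith

lemma N_sum_le {ι : Type*} (s : Finset ι) (g : ι → Matrix (Fin m) (Fin n) ℝ) :
    N (∑ x ∈ s, g x) ≤ ∑ x ∈ s, N (g x) := by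
  classical
  induction s using Finset.induction_on with
  | empty => simp [N_zero hN_smul]
  | insert a s' hx ih =>
    rw [Finset.sum_insert hx, Finset.sum_insert hx]
    exact le_trans (hN_add _ _) (by linarith)

lemma exists_upper_bound :
    ∃ C : ℝ, 0 < C ∧ ∀ A, N A ≤ C * ‖A‖ := by
  classical
  refine ⟨(∑ i : Fin m, ∑ j : Fin n, N (Matrix.single i j 1)) + 1, ?_, ?_⟩
  · have : 0 ≤ ∑ i : Fin m, ∑ j : Fin n, N (Matrix.single i j 1) :=
      Finset.sum_nonneg fun i _ => Finset.sum_nonneg fun j _ => N_nonneg hN_add hN_smul _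
    linarith
  · intro A
    conv_lhs => rw [Matrix.matrix_eq_sum_single A]
    refine le_trans (N_sum_le hN_add hN_smul _ _) ?_
    have hij : ∀ i j, N (Matrix.single i j (A i j)) ≤ N (Matrix.single i j 1) * ‖A‖ := by
      intro i j
      have h1 : Matrix.single i j (A i j) = A i j • Matrix.single i j 1 := by
        rw [Matrix.smul_single, smul_eq_mul, mul_one]
      rw [h1, hN_smul, mul_comm]
      exact mul_le_mul_of_nonneg_left
        (le_trans (Matrix.norm_entry_le_entrywise_sup_norm A) le_rfl)
        (N_nonneg hN_add hN_smul _)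
    refine le_trans (Finset.sum_le_sum fun i _ => N_sum_le hN_add hN_smul _ _) ?_
    refine le_trans (Finset.sum_le_sum fun i _ => Finset.sum_le_sum fun j _ => hij i j) ?_
    simp_rw [← Finset.sum_mul]
    have hA : 0 ≤ ‖A‖ := norm_nonneg A
    nlinarith [hA]

include hN_def

lemma exists_lower_bound (hm : 0 < m) (hn : 0 < n) :
    ∃ c : ℝ, 0 < c ∧ ∀ A, c * ‖A‖ ≤ N A := by
  obtain ⟨C, hC, hCle⟩ := exists_upper_bound hN_add hN_smul (N := N)
  -- N is continuous
  have hcont : Continuous N := by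
    refine Metric.continuous_iff.mpr fun A ε hε => ⟨ε / C, by positivity, fun B hB => ?_⟩
    have h1 : N B ≤ N A + N (B - A) := by
      have := hN_add A (B - A); simpa using this
    have h2 : N A ≤ N B + N (A - B) := by
      have := hN_add B (A - B); simpa using this
    have h3 : N (B - A) ≤ C * ‖B - A‖ := hCle _
    have h4 : N (A - B) ≤ C * ‖A - B‖ := hCle _
    rw [dist_eq_norm] at hB ⊢
    rw [Real.norm_eq_abs, abs_lt]
    have h5 : ‖A - B‖ = ‖B - A‖ := by rw [← norm_neg]; congr 1; abel
    rw [h5] at h4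
    have h6 : ‖B - A‖ * C < ε := (lt_div_iff₀ hC).mp hB
    have h7 : C * ‖B - A‖ < ε := by linarith [mul_comm C ‖B - A‖]
    constructor <;> linarith
  have hsphere : IsCompact (Metric.sphere (0 : Matrix (Fin m) (Fin n) ℝ) 1) :=
    isCompact_sphere 0 1
  have hne : (Metric.sphere (0 : Matrix (Fin m) (Fin n) ℝ) 1).Nonempty := by
    set A0 : Matrix (Fin m) (Fin n) ℝ := Matrix.single ⟨0, hm⟩ ⟨0, hn⟩ 1
    have hA0 : A0 ≠ 0 := by
      intro h
      have : A0 ⟨0, hm⟩ ⟨0, hn⟩ = 0 := by rw [h]; rfl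
      simp [A0, Matrix.single] at this
    refine ⟨‖A0‖⁻¹ • A0, ?_⟩
    rw [mem_sphere_zero_iff_norm, norm_smul, norm_inv, norm_norm]
    rw [inv_mul_cancel₀ (norm_ne_zero_iff.mpr hA0)]
  obtain ⟨x0, hx0mem, hx0min⟩ := hsphere.exists_isMinOn hne hcont.continuousOn
  have hx0norm : ‖x0‖ = 1 := mem_sphere_zero_iff_norm.mp hx0mem
  have hx0ne : x0 ≠ 0 := fun h => by simp [h] at hx0norm
  have hc : 0 < N x0 := by
    rcases lt_or_eq_of_le (N_nonneg hN_add hN_smul x0) with h | h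
    · exact h
    · exact absurd ((hN_def x0).mp h.symm) hx0ne
  refine ⟨N x0, hc, fun A => ?_⟩
  rcases eq_or_ne A 0 with rfl | hA
  · simp [N_zero hN_smul]
  · have hAn : (0 : ℝ) < ‖A‖ := norm_pos_iff.mpr hA
    have hmem : ‖A‖⁻¹ • A ∈ Metric.sphere (0 : Matrix (Fin m) (Fin n) ℝ) 1 := by
      rw [mem_sphere_zero_iff_norm, norm_smul, norm_inv, norm_norm,
        inv_mul_cancel₀ (ne_of_gt hAn)]
    have := hx0min hmem
    have h2 : N (‖A‖⁻¹ • A) = ‖A‖⁻¹ * N A := by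
      rw [hN_smul, abs_of_pos (by positivity)]
    rw [Set.mem_setOf_eq] at this
    rw [h2] at this
    calc N x0 * ‖A‖ ≤ (‖A‖⁻¹ * N A) * ‖A‖ := by nlinarith
      _ = N A := by field_simp

end NormFacts

section DualFacts

lemma frobInner_le_card_norm (A B : Matrix (Fin m) (Fin n) ℝ) :
    frobInner A B ≤ (m * n : ℝ) * ‖A‖ * ‖B‖ := by
  have h : ∀ i j, A i j * B i j ≤ ‖A‖ * ‖B‖ := by
    intro i j
    calc A i j * B i j ≤ |A i j * B i j| := le_abs_self _
      _ = |A i j| * |B i j| := abs_mul _ _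
      _ ≤ ‖A‖ * ‖B‖ := by
          refine mul_le_mul ?_ ?_ (abs_nonneg _) (norm_nonneg _)
          · exact Matrix.norm_entry_le_entrywise_sup_norm A
          · exact Matrix.norm_entry_le_entrywise_sup_norm B
  calc frobInner A B ≤ ∑ i : Fin m, ∑ j : Fin n, ‖A‖ * ‖B‖ :=
        Finset.sum_le_sum fun i _ => Finset.sum_le_sum fun j _ => h i j
    _ = (m * n : ℝ) * ‖A‖ * ‖B‖ := by
        simp [Finset.sum_const, mul_assoc]

variable {c : ℝ} (hc : 0 < c) (hcle : ∀ A, c * ‖A‖ ≤ N A)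

include hN_smul hN_def in
lemma dual_set_nonempty (B : Matrix (Fin m) (Fin n) ℝ) :
    ((fun U => frobInner U B) '' {U | N U ≤ 1}).Nonempty :=
  ⟨frobInner 0 B, 0, by simp [N_zero hN_smul], rfl⟩

include hc hcle in
lemma dual_set_bddAbove (B : Matrix (Fin m) (Fin n) ℝ) :
    BddAbove ((fun U => frobInner U B) '' {U | N U ≤ 1}) := by
  refine ⟨(m * n : ℝ) * c⁻¹ * ‖B‖, ?_⟩
  rintro x ⟨U, hU, rfl⟩
  rw [Set.mem_setOf_eq] at hU
  have hUn : ‖U‖ ≤ c⁻¹ := by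
    nlinarith [le_trans (hcle U) hU, mul_inv_cancel₀ (ne_of_gt hc)]
  calc frobInner U B ≤ (m * n : ℝ) * ‖U‖ * ‖B‖ := frobInner_le_card_norm U B
    _ ≤ (m * n : ℝ) * c⁻¹ * ‖B‖ := by
        have h0 : (0:ℝ) ≤ (m*n : ℝ) := by positivity
        nlinarith [mul_le_mul_of_nonneg_left hUn (mul_nonneg h0 (norm_nonneg B))]

include hc hcle in
lemma le_dualNorm {U : Matrix (Fin m) (Fin n) ℝ} (hU : N U ≤ 1)
    (B : Matrix (Fin m) (Fin n) ℝ) :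
    frobInner U B ≤ dualNorm N B :=
  le_csSup (dual_set_bddAbove hc hcle B) ⟨U, hU, rfl⟩

include hN_smul hN_def in
lemma dualNorm_le (B : Matrix (Fin m) (Fin n) ℝ) {b : ℝ}
    (h : ∀ U, N U ≤ 1 → frobInner U B ≤ b) : dualNorm N B ≤ b := by
  refine csSup_le (dual_set_nonempty hN_smul hN_def B) ?_
  rintro x ⟨U, hU, rfl⟩
  exact h U hU

include hN_smul hN_def hc hcle in
lemma dualNorm_nonneg (B : Matrix (Fin m) (Fin n) ℝ) : 0 ≤ dualNorm N B := by
  have := le_dualNorm hc hcle (U := 0) (by simp [N_zero hN_smul]) B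
  simpa [frobInner] using this

include hN_add hN_smul hN_def hc hcle in
lemma frobInner_le_N_mul_dualNorm (A B : Matrix (Fin m) (Fin n) ℝ) :
    frobInner A B ≤ N A * dualNorm N B := by
  rcases eq_or_ne A 0 with rfl | hA
  · simp [frobInner, N_zero hN_smul]
  · have hNA : 0 < N A := by
      rcases lt_or_eq_of_le (N_nonneg hN_add hN_smul A) with h | h
      · exact h
      · exact absurd ((hN_def A).mp h.symm) hA
    have hU : N ((N A)⁻¹ • A) ≤ 1 := by
      rw [hN_smul, abs_of_pos (by positivity), inv_mul_cancel₀ (ne_of_gt hNA)]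
    have := le_dualNorm hc hcle hU B
    rw [frobInner_smul_left] at this
    calc frobInner A B = N A * ((N A)⁻¹ * frobInner A B) := by field_simp
      _ ≤ N A * dualNorm N B := by nlinarith

end DualFacts

section Descent

include hN_add hN_smul hN_def in
lemma descent_lemma {c : ℝ} (hc : 0 < c) (hcle : ∀ A, c * ‖A‖ ≤ N A)
    (f : Matrix (Fin m) (Fin n) ℝ → ℝ)
    (grad : Matrix (Fin m) (Fin n) ℝ → Matrix (Fin m) (Fin n) ℝ)
    (Df : Matrix (Fin m) (Fin n) ℝ → (Matrix (Fin m) (Fin n) ℝ →L[ℝ] ℝ))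
    (hDf : ∀ X, HasFDerivAt f (Df X) X)
    (hDf_grad : ∀ X H, Df X H = frobInner (grad X) H)
    (L : ℝ) (hL : 0 < L)
    (hLip : ∀ X Y, dualNorm N (grad X - grad Y) ≤ L * N (X - Y))
    (X Δ : Matrix (Fin m) (Fin n) ℝ) :
    f (X + Δ) ≤ f X + frobInner (grad X) Δ + L / 2 * (N Δ)^2 := by
  set φ : ℝ → ℝ := fun t =>
    f (X + t • Δ) - t * frobInner (grad X) Δ - L / 2 * t ^ 2 * (N Δ) ^ 2 with hφ
  have hline : ∀ t : ℝ, HasDerivAt (fun t : ℝ => X + t • Δ) Δ t := by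
    intro t
    have h1 : HasDerivAt (fun t : ℝ => t • Δ) ((1 : ℝ) • Δ) t :=
      (hasDerivAt_id t).smul_const Δ
    have h2 := h1.const_add X; rw [one_smul] at h2; exact h2
  have hder : ∀ t : ℝ, HasDerivAt φ
      (frobInner (grad (X + t • Δ)) Δ - frobInner (grad X) Δ - L * t * (N Δ) ^ 2) t := by
    intro t
    have h1 : HasDerivAt (fun t : ℝ => f (X + t • Δ)) (Df (X + t • Δ) Δ) t :=
      (hDf (X + t • Δ)).comp_hasDerivAt t (hline t)
    rw [hDf_grad] at h1
    have h2 : HasDerivAt (fun t : ℝ => t * frobInner (grad X) Δ)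
        (frobInner (grad X) Δ) t := by
      simpa using (hasDerivAt_id t).mul_const (frobInner (grad X) Δ)
    have h3 : HasDerivAt (fun t : ℝ => L / 2 * t ^ 2 * (N Δ) ^ 2)
        (L * t * (N Δ) ^ 2) t := by
      have := ((hasDerivAt_pow 2 t).const_mul (L / 2)).mul_const ((N Δ) ^ 2)
      refine this.congr_deriv ?_
      ring
    exact (h1.sub h2).sub h3
  have hφdiff : ∀ t : ℝ, DifferentiableAt ℝ φ t := fun t => (hder t).differentiableAt
  have hmono : AntitoneOn φ (Set.Icc 0 1) := by
    refine antitoneOn_of_deriv_nonpos (convex_Icc 0 1)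
      (fun t _ => (hφdiff t).continuousAt.continuousWithinAt) ?_ ?_
    · intro t ht
      exact (hφdiff t).differentiableWithinAt
    · intro t ht
      rw [interior_Icc] at ht
      rw [(hder t).deriv]
      have hb : frobInner (grad (X + t • Δ)) Δ - frobInner (grad X) Δ
          ≤ L * t * (N Δ) ^ 2 := by
        have e1 : frobInner (grad (X + t • Δ)) Δ - frobInner (grad X) Δ
            = frobInner Δ (grad (X + t • Δ) - grad X) := by
          rw [frobInner_comm Δ, frobInner_sub_left]
        rw [e1]
        have e2 := frobInner_le_N_mul_dualNorm hN_add hN_smul hN_def hc hcle Δ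
          (grad (X + t • Δ) - grad X)
        have e3 : dualNorm N (grad (X + t • Δ) - grad X) ≤ L * N (t • Δ) := by
          have := hLip (X + t • Δ) X
          simpa using this
        have e4 : N (t • Δ) = t * N Δ := by
          rw [hN_smul, abs_of_pos ht.1]
        have hNΔ : 0 ≤ N Δ := N_nonneg hN_add hN_smul Δ
        have hdual0 : 0 ≤ dualNorm N (grad (X + t • Δ) - grad X) :=
          dualNorm_nonneg hN_smul hN_def hc hcle _
        calc frobInner Δ (grad (X + t • Δ) - grad X)
            ≤ N Δ * dualNorm N (grad (X + t • Δ) - grad X) := e2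
          _ ≤ N Δ * (L * (t * N Δ)) := by
              rw [e4] at e3; nlinarith
          _ = L * t * (N Δ) ^ 2 := by ring
      linarith
  have h01 : φ 1 ≤ φ 0 := hmono (Set.mem_Icc.mpr ⟨le_refl 0, zero_le_one⟩)
    (Set.mem_Icc.mpr ⟨zero_le_one, le_refl 1⟩) zero_le_one
  simp only [hφ, one_smul, one_pow, mul_one, zero_smul, add_zero, zero_pow, zero_mul,
    mul_zero, sub_zero, one_mul] at h01
  linarith

end Descent

section MoreHelpers

lemma div_div_half_eq (B' q' w K' : ℝ) (h1' : 0 < q') (h2' : 0 < w) (h3' : 0 < K') :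
    (B' / (q' / 2 * K')) / w = (2 * B' / (q' * w)) / K' := by
  field_simp

lemma continuous_finset_inf' {ι : Type*} {s : Finset ι} (hs : s.Nonempty) :
    Continuous fun e : ι → ℝ => s.inf' hs e := by
  induction hs using Finset.Nonempty.cons_induction with
  | singleton a => simpa using continuous_apply a
  | cons a s ha hs ih =>
    have : (fun e : ι → ℝ => (Finset.cons a s ha).inf' (Finset.cons_nonempty ha) e)
        = fun e => e a ⊓ s.inf' hs e := funext fun e => Finset.inf'_cons hs e
    rw [this]
    exact (continuous_apply a).inf ih

lemma rectDiag_continuous : Continuous fun e : Fin (Nat.min m n) → ℝ => rectDiag m n e := by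
  refine continuous_pi fun i => continuous_pi fun j => ?_
  by_cases h : (i : ℕ) = (j : ℕ) ∧ (i : ℕ) < Nat.min m n
  · simpa only [rectDiag, Matrix.of_apply, dif_pos h] using continuous_apply _
  · simpa only [rectDiag, Matrix.of_apply, dif_neg h] using continuous_const

include hN_add hN_smul in
lemma N_continuous : Continuous N := by
  obtain ⟨C, hC, hCle⟩ := exists_upper_bound hN_add hN_smul (N := N)
  refine Metric.continuous_iff.mpr fun A ε hε => ⟨ε / C, by positivity, fun B hB => ?_⟩
  have h1 : N B ≤ N A + N (B - A) := by
    have := hN_add A (B - A); simpa using this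
  have h2 : N A ≤ N B + N (A - B) := by
    have := hN_add B (A - B); simpa using this
  have h3 : N (B - A) ≤ C * ‖B - A‖ := hCle _
  have h4 : N (A - B) ≤ C * ‖A - B‖ := hCle _
  rw [dist_eq_norm] at hB ⊢
  rw [Real.norm_eq_abs, abs_lt]
  have h5 : ‖A - B‖ = ‖B - A‖ := by rw [← norm_neg]; congr 1; abel
  rw [h5] at h4
  have h6 : ‖B - A‖ * C < ε := (lt_div_iff₀ hC).mp hB
  have h7 : C * ‖B - A‖ < ε := by linarith [mul_comm C ‖B - A‖]
  constructor <;> linarith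

open ProbabilityTheory in
lemma map_pi_of_iid {Ω : Type*} {m0 : MeasurableSpace Ω} {μ : Measure Ω}
    [IsProbabilityMeasure μ] {r : ℕ}
    (E : ℕ → Ω → Fin r → ℝ)
    (ν : Measure ℝ) [IsProbabilityMeasure ν]
    (hE_meas : ∀ (k : ℕ) (i : Fin r), Measurable fun ω => E k ω i)
    (hE_indep : ProbabilityTheory.iIndepFun
      (fun (ki : ℕ × Fin r) ω => E ki.1 ω ki.2) μ)
    (hE_ident : ∀ k i, Measure.map (fun ω => E k ω i) μ = ν) (k : ℕ) :
    Measure.map (fun ω i => E k ω i) μ = Measure.pi fun _ => ν := by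
  classical
  refine (Measure.pi_eq fun s hs => ?_).symm
  have hWmeas : Measurable (fun ω (i : Fin r) => E k ω i) :=
    measurable_pi_lambda _ (hE_meas k)
  rw [Measure.map_apply hWmeas (MeasurableSet.univ_pi hs)]
  have h1 : (fun ω (i : Fin r) => E k ω i) ⁻¹' Set.pi Set.univ s
      = ⋂ p ∈ (Finset.univ.image fun i : Fin r => ((k, i) : ℕ × Fin r)),
        (fun ω => E p.1 ω p.2) ⁻¹' s p.2 := by
    ext ω
    simp [Set.mem_pi]
  rw [h1, hE_indep.meas_biInter (fun p hp => ?_)]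
  · rw [Finset.prod_image (fun i _ j _ h => by simpa using h)]
    refine Finset.prod_congr rfl fun i _ => ?_
    rw [← hE_ident k i, Measure.map_apply (hE_meas k i) (hs i)]
  · exact ⟨s p.2, hs p.2, rfl⟩

end MoreHelpers

end KaonAux

open KaonAux in
/-- Convergence of random spectral descent (Kaon): with the spectral mapping
`p_k(σ) = E_k / ‖diag(E_k)‖`, where the entries of the `E_k ∈ ℝ^r` are i.i.d. samples of a
fixed distribution supported on `(0, ∞)`, drawn independently across iterations and
independently of the algorithmic history (the initial point is deterministic), and constant
step size `α_k = η/L`, `η ∈ (0,2)`, almost surely there is a finite constant `C` with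
`min_{k<K} ‖G_k‖_*² ≤ C/K` for all `K ≥ 1`. -/
theorem stmt5 {m n : ℕ}
    {Ω : Type*} {m0 : MeasurableSpace Ω} (μ : Measure Ω) [IsProbabilityMeasure μ]
    (N : Matrix (Fin m) (Fin n) ℝ → ℝ)
    -- `N` is a norm:
    (hN_add : ∀ A B, N (A + B) ≤ N A + N B)
    (hN_smul : ∀ (c : ℝ) A, N (c • A) = |c| * N A)
    (hN_def : ∀ A, N A = 0 ↔ A = 0)
    -- `N` is orthogonally invariant:
    (hN_inv : ∀ (U : Matrix (Fin m) (Fin m) ℝ) (V : Matrix (Fin n) (Fin n) ℝ)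
      (A : Matrix (Fin m) (Fin n) ℝ), U * Uᵀ = 1 → V * Vᵀ = 1 → N (U * A * Vᵀ) = N A)
    (f : Matrix (Fin m) (Fin n) ℝ → ℝ)
    (grad : Matrix (Fin m) (Fin n) ℝ → Matrix (Fin m) (Fin n) ℝ)
    (Df : Matrix (Fin m) (Fin n) ℝ → (Matrix (Fin m) (Fin n) ℝ →L[ℝ] ℝ))
    -- `f` is continuously differentiable with gradient `grad` (Frobenius inner product):
    (hDf : ∀ X, HasFDerivAt f (Df X) X)
    (hDf_grad : ∀ X H, Df X H = frobInner (grad X) H)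
    (hgrad_cont : Continuous grad)
    -- `f` is bounded below by `fmin`:
    (fmin : ℝ) (hfmin : ∀ X, fmin ≤ f X)
    -- gradients are `L`-Lipschitz with respect to `N`:
    (L : ℝ) (hL : 0 < L)
    (hLip : ∀ X Y, dualNorm N (grad X - grad Y) ≤ L * N (X - Y))
    -- the random vectors `E_k` with i.i.d. entries from a fixed distribution `ν` on `(0, ∞)`:
    (E : ℕ → Ω → Fin (Nat.min m n) → ℝ)
    (ν : Measure ℝ) [IsProbabilityMeasure ν] (hν : ν (Set.Ioi (0 : ℝ)) = 1)
    (hE_pos : ∀ᵐ ω ∂μ, ∀ k i, 0 < E k ω i)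
    (hE_meas : ∀ (k : ℕ) (i : Fin (Nat.min m n)), Measurable fun ω => E k ω i)
    -- the entries are i.i.d. across coordinates and iterations:
    (hE_indep : ProbabilityTheory.iIndepFun
      (fun (ki : ℕ × Fin (Nat.min m n)) ω => E ki.1 ω ki.2) μ)
    (hE_ident : ∀ k i, Measure.map (fun ω => E k ω i) μ = ν)
    -- step size `α_k = η/L` with `η ∈ (0, 2)`:
    (η : ℝ) (hη : η ∈ Set.Ioo (0 : ℝ) 2)
    -- the iterates (deterministic start, so the `E_k` are independent of the history):
    (X : ℕ → Ω → Matrix (Fin m) (Fin n) ℝ)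
    (X0 : Matrix (Fin m) (Fin n) ℝ) (hX0 : ∀ ω, X 0 ω = X0)
    (U : ℕ → Ω → Matrix (Fin m) (Fin m) ℝ) (V : ℕ → Ω → Matrix (Fin n) (Fin n) ℝ)
    (σ : ℕ → Ω → Fin (Nat.min m n) → ℝ)
    (hU : ∀ k ω, U k ω * (U k ω)ᵀ = 1) (hV : ∀ k ω, V k ω * (V k ω)ᵀ = 1)
    (hσ : ∀ k ω i, 0 < σ k ω i)
    (hSVD : ∀ k ω, grad (X k ω) = U k ω * rectDiag m n (σ k ω) * (V k ω)ᵀ)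
    -- the update direction uses `p_k(σ) = E_k / ‖diag(E_k)‖`:
    (D : ℕ → Ω → Matrix (Fin m) (Fin n) ℝ)
    (hD : ∀ k ω, D k ω =
      U k ω * rectDiag m n (fun i => E k ω i / N (rectDiag m n (E k ω))) * (V k ω)ᵀ)
    (hX : ∀ k ω, X (k + 1) ω =
      X k ω - (η / L * frobInner (grad (X k ω)) (D k ω)) • D k ω) :
    ∀ᵐ ω ∂μ, ∃ C : ℝ, ∀ K : ℕ, 1 ≤ K → ∃ k < K,
      dualNorm N (grad (X k ω)) ^ 2 ≤ C / K := by
  classical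
  have hN0 : N (0 : Matrix (Fin m) (Fin n) ℝ) = 0 := (hN_def 0).mpr rfl
  have htriv : (∀ (U' V' : Matrix (Fin m) (Fin n) ℝ), frobInner U' V' = 0) →
      ∀ᵐ ω ∂μ, ∃ C : ℝ, ∀ K : ℕ, 1 ≤ K → ∃ k < K,
        dualNorm N (grad (X k ω)) ^ 2 ≤ C / K := by
    intro h
    refine ae_of_all _ fun ω => ⟨1, fun K hK => ⟨0, hK, ?_⟩⟩
    have himg : (fun U' => frobInner U' (grad (X 0 ω))) '' {U' | N U' ≤ 1} = {0} := by
      have h1 : (fun U' : Matrix (Fin m) (Fin n) ℝ => frobInner U' (grad (X 0 ω)))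
          = fun _ => (0 : ℝ) := funext fun U' => h U' _
      rw [h1]
      exact Set.Nonempty.image_const ⟨0, by simp [hN0]⟩ 0
    rw [dualNorm, himg, csSup_singleton]
    have h0 : (0:ℝ)^2 = 0 := by norm_num
    rw [h0]
    positivity
  rcases Nat.eq_zero_or_pos m with hm0 | hm
  · subst hm0
    exact htriv fun U' V' => by simp [frobInner]
  rcases Nat.eq_zero_or_pos n with hn0 | hn
  · subst hn0
    exact htriv fun U' V' => by simp [frobInner]
  clear htriv
  have hr : 0 < Nat.min m n := lt_min hm hn
  haveI : Nonempty (Fin (Nat.min m n)) := ⟨⟨0, hr⟩⟩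
  obtain ⟨c, hc, hcle⟩ := exists_lower_bound hN_add hN_smul hN_def hm hn
  set κ : ℝ := η * (2 - η) / (2 * L) with hκdef
  obtain ⟨hη0, hη2⟩ := hη
  have hκ : 0 < κ := by
    have h2 : 0 < 2 - η := by linarith
    positivity
  -- the scalar random variables `Z k`
  set gZ : (Fin (Nat.min m n) → ℝ) → ℝ :=
    fun e => (Finset.univ.inf' Finset.univ_nonempty e) / N (rectDiag m n e) with hgZdef
  have hgZmeas : Measurable gZ := by
    have h1 : Continuous fun e : Fin (Nat.min m n) → ℝ =>
        Finset.univ.inf' Finset.univ_nonempty e := continuous_finset_inf' _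
    have h2 : Continuous fun e : Fin (Nat.min m n) → ℝ => N (rectDiag m n e) :=
      (N_continuous hN_add hN_smul).comp rectDiag_continuous
    exact h1.measurable.div h2.measurable
  set Z : ℕ → Ω → ℝ := fun k ω => gZ (fun i => E k ω i) with hZdef
  have hWmeas : ∀ k, Measurable fun ω (i : Fin (Nat.min m n)) => E k ω i :=
    fun k => measurable_pi_lambda _ (hE_meas k)
  have hZmeas : ∀ k, Measurable (Z k) := fun k => hgZmeas.comp (hWmeas k)
  have hWident : ∀ k, ProbabilityTheory.IdentDistrib (fun ω i => E k ω i)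
      (fun ω i => E 0 ω i) μ μ := by
    intro k
    refine ⟨(hWmeas k).aemeasurable, (hWmeas 0).aemeasurable, ?_⟩
    rw [map_pi_of_iid E ν hE_meas hE_indep hE_ident k,
      map_pi_of_iid E ν hE_meas hE_indep hE_ident 0]
  have hZident : ∀ k, ProbabilityTheory.IdentDistrib (Z k) (Z 0) μ μ :=
    fun k => (hWident k).comp hgZmeas
  have hZindep : Pairwise fun j k => ProbabilityTheory.IndepFun (Z j) (Z k) μ := by
    intro j k hjk
    set S : Finset (ℕ × Fin (Nat.min m n)) := Finset.univ.image (fun i => (j, i)) with hSdef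
    set T : Finset (ℕ × Fin (Nat.min m n)) := Finset.univ.image (fun i => (k, i)) with hTdef
    have hdisj : Disjoint S T := by
      rw [Finset.disjoint_left]
      rintro ⟨k1, i1⟩ h1 h2
      simp only [hSdef, hTdef, Finset.mem_image, Finset.mem_univ, true_and] at h1 h2
      obtain ⟨i1', hi1⟩ := h1
      obtain ⟨i2', hi2⟩ := h2
      exact hjk ((Prod.ext_iff.mp hi1).1.trans (Prod.ext_iff.mp hi2).1.symm)
    have hbase := hE_indep.indepFun_finset S T hdisj (fun p => hE_meas p.1 p.2)
    have hmemS : ∀ i : Fin (Nat.min m n), (j, i) ∈ S :=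
      fun i => Finset.mem_image_of_mem _ (Finset.mem_univ i)
    have hmemT : ∀ i : Fin (Nat.min m n), (k, i) ∈ T :=
      fun i => Finset.mem_image_of_mem _ (Finset.mem_univ i)
    have hφS : Measurable (fun v : ({x // x ∈ S} → ℝ) =>
        gZ (fun i => v ⟨(j, i), hmemS i⟩)) :=
      hgZmeas.comp (measurable_pi_lambda _ fun i => measurable_pi_apply _)
    have hφT : Measurable (fun v : ({x // x ∈ T} → ℝ) =>
        gZ (fun i => v ⟨(k, i), hmemT i⟩)) :=
      hgZmeas.comp (measurable_pi_lambda _ fun i => measurable_pi_apply _)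
    exact hbase.comp hφS hφT
  -- positivity of `Z`
  have hNDpos : ∀ (e : Fin (Nat.min m n) → ℝ), (∀ i, 0 < e i) →
      0 < N (rectDiag m n e) := by
    intro e he
    have hne : rectDiag m n e ≠ 0 := by
      intro h0
      have h1 := rectDiag_apply_cast e ⟨0, hr⟩
      rw [h0] at h1
      simp only [Matrix.zero_apply] at h1
      exact absurd h1.symm (ne_of_gt (he ⟨0, hr⟩))
    rcases lt_or_eq_of_le (N_nonneg hN_add hN_smul (rectDiag m n e)) with h | h
    · exact h
    · exact absurd ((hN_def _).mp h.symm) hne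
  have hZpos : ∀ (k : ℕ) (ω : Ω), (∀ i, 0 < E k ω i) → 0 < Z k ω := by
    intro k ω hωk
    refine div_pos ?_ (hNDpos _ hωk)
    rw [Finset.lt_inf'_iff]
    exact fun i _ => hωk i
  have hZ0pos : ∀ᵐ ω ∂μ, 0 < Z 0 ω := by
    filter_upwards [hE_pos] with ω hω
    exact hZpos 0 ω (hω 0)
  -- choose the threshold ρ
  obtain ⟨jρ, hjρ⟩ : ∃ j : ℕ, μ {ω | 1 / (j + 1 : ℝ) ≤ Z 0 ω} ≠ 0 := by
    by_contra hcon
    push_neg at hcon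
    have hae : ∀ᵐ ω ∂μ, ∀ j : ℕ, ¬ (1 / (j + 1 : ℝ) ≤ Z 0 ω) := by
      rw [MeasureTheory.ae_all_iff]
      intro j
      rw [MeasureTheory.ae_iff]
      convert hcon j using 2
      ext ω
      simp
    haveI : (MeasureTheory.ae μ).NeBot := MeasureTheory.IsProbabilityMeasure.ae_neBot
    obtain ⟨ω, hω1, hω2⟩ := (hZ0pos.and hae).exists
    obtain ⟨j, hj⟩ := exists_nat_one_div_lt hω1
    exact hω2 j hj.le
  set ρ : ℝ := 1 / (jρ + 1 : ℝ) with hρdef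
  have hρ : 0 < ρ := by positivity
  set A : Set Ω := {ω | ρ ≤ Z 0 ω} with hAdef
  have hAmeas : MeasurableSet A := (hZmeas 0) measurableSet_Ici
  set q : ℝ := (μ A).toReal with hqdef
  have hqpos : 0 < q := ENNReal.toReal_pos hjρ (measure_ne_top μ A)
  -- the indicator variables and the strong law
  set θ : ℝ → ℝ := (Set.Ici ρ).indicator fun _ => (1 : ℝ) with hθdef
  have hθmeas : Measurable θ := measurable_const.indicator measurableSet_Ici
  set Y : ℕ → Ω → ℝ := fun k ω => θ (Z k ω) with hYdef
  have hYint : Integrable (Y 0) μ := by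
    have h1 : Y 0 = (Z 0 ⁻¹' Set.Ici ρ).indicator fun _ => (1 : ℝ) := by
      funext ω
      simp [hYdef, hθdef, Set.indicator_apply]
    rw [h1]
    exact (integrable_const (1 : ℝ)).indicator ((hZmeas 0) measurableSet_Ici)
  have hYindep : Pairwise (Function.onFun (ProbabilityTheory.IndepFun · · μ) Y) :=
    fun j k hjk => ProbabilityTheory.IndepFun.comp (hZindep hjk) hθmeas hθmeas
  have hYident : ∀ k, ProbabilityTheory.IdentDistrib (Y k) (Y 0) μ μ :=
    fun k => (hZident k).comp hθmeas
  have hEY : (∫ ω, Y 0 ω ∂μ) = q := by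
    have h1 : Y 0 = A.indicator fun _ => (1 : ℝ) := by
      funext ω
      simp [hYdef, hθdef, hAdef, Set.indicator_apply, Set.mem_setOf_eq]
    rw [h1, MeasureTheory.integral_indicator_const _ hAmeas]
    simp [hqdef, Measure.real]
  have hslln := ProbabilityTheory.strong_law_ae_real Y hYint hYindep hYident
  rw [hEY] at hslln
  -- pointwise analysis
  filter_upwards [hE_pos, hslln] with ω hpos hlim
  have hND : ∀ k, 0 < N (rectDiag m n (E k ω)) := fun k => hNDpos _ (hpos k)
  have hD1 : ∀ k, N (D k ω) = 1 := by
    intro k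
    rw [hD k ω, hN_inv _ _ _ (hU k ω) (hV k ω)]
    have h1 : (fun i => E k ω i / N (rectDiag m n (E k ω)))
        = fun i => (N (rectDiag m n (E k ω)))⁻¹ * E k ω i := by
      funext i
      rw [div_eq_mul_inv, mul_comm]
    rw [h1, rectDiag_smul, hN_smul, abs_of_pos (inv_pos.mpr (hND k)),
      inv_mul_cancel₀ (ne_of_gt (hND k))]
  set a : ℕ → ℝ := fun k => frobInner (grad (X k ω)) (D k ω) with haDef
  have ha_eq : ∀ k, a k
      = ∑ i, σ k ω i * (E k ω i / N (rectDiag m n (E k ω))) := by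
    intro k
    rw [haDef]
    simp only
    rw [hSVD k ω, hD k ω, frobInner_conj (hU k ω) (hV k ω), frobInner_rectDiag]
    exact Finset.sum_congr rfl fun i _ => by rw [rectDiag_apply_cast]
  have hstep : ∀ k, f (X (k+1) ω) ≤ f (X k ω) - κ * (a k)^2 := by
    intro k
    have hXk : X (k+1) ω = X k ω + (-(η / L * a k)) • D k ω := by
      rw [hX k ω, sub_eq_add_neg, ← neg_smul]
    have hdes := descent_lemma hN_add hN_smul hN_def hc hcle f grad Df hDf hDf_grad
      L hL hLip (X k ω) ((-(η / L * a k)) • D k ω)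
    rw [← hXk, frobInner_smul_right, hN_smul, hD1 k, mul_one] at hdes
    have habs : |(-(η / L * a k))| ^ 2 = (η / L * a k)^2 := by
      rw [sq_abs]
      ring
    rw [habs] at hdes
    have hfin : -(η / L * a k) * a k + L / 2 * (η / L * a k)^2 = -(κ * (a k)^2) := by
      rw [hκdef]
      field_simp
      ring
    linarith [hdes]
  have hsum : ∀ K : ℕ, κ * ∑ k ∈ Finset.range K, (a k)^2 ≤ f X0 - fmin := by
    have htel : ∀ K : ℕ, f (X K ω) + κ * ∑ k ∈ Finset.range K, (a k)^2 ≤ f X0 := by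
      intro K
      induction K with
      | zero => simp [hX0 ω]
      | succ K ih =>
        rw [Finset.sum_range_succ, mul_add]
        have := hstep K
        linarith
    intro K
    linarith [htel K, hfmin (X K ω)]
  have hdual_le : ∀ k, dualNorm N (grad (X k ω)) ≤ (∑ i, σ k ω i) / c := by
    intro k
    refine dualNorm_le hN_smul hN_def _ fun U' hU' => ?_
    have hUo := hU k ω
    have hVo := hV k ω
    have hUo' : (U k ω)ᵀ * (U k ω) = 1 := mul_eq_one_comm.mp hUo
    have hVo' : (V k ω)ᵀ * (V k ω) = 1 := mul_eq_one_comm.mp hVo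
    set W : Matrix (Fin m) (Fin n) ℝ := (U k ω)ᵀ * U' * (V k ω) with hWdef
    have he : U k ω * W * (V k ω)ᵀ = U' := by
      rw [hWdef]
      calc U k ω * ((U k ω)ᵀ * U' * V k ω) * (V k ω)ᵀ
          = (U k ω * (U k ω)ᵀ) * U' * (V k ω * (V k ω)ᵀ) := by
            simp only [Matrix.mul_assoc]
        _ = U' := by rw [hUo, hVo, Matrix.one_mul, Matrix.mul_one]
    have hNW : N W = N U' := by
      have h1 : (U k ω)ᵀ * ((U k ω)ᵀ)ᵀ = 1 := by
        rw [Matrix.transpose_transpose]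
        exact hUo'
      have h2 : (V k ω)ᵀ * ((V k ω)ᵀ)ᵀ = 1 := by
        rw [Matrix.transpose_transpose]
        exact hVo'
      have h3 := hN_inv ((U k ω)ᵀ) ((V k ω)ᵀ) U' h1 h2
      rw [Matrix.transpose_transpose] at h3
      rw [hWdef]
      exact h3
    have hkey : frobInner U' (grad (X k ω)) = frobInner W (rectDiag m n (σ k ω)) := by
      conv_lhs => rw [← he, hSVD k ω]
      exact frobInner_conj hUo hVo _ _
    rw [hkey, frobInner_rectDiag, Finset.sum_div]
    refine Finset.sum_le_sum fun i _ => ?_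
    have hσi := le_of_lt (hσ k ω i)
    have hWnorm : ‖W‖ ≤ 1 / c := by
      have h4 := hcle W
      rw [hNW] at h4
      rw [le_div_iff₀ hc]
      nlinarith [hU']
    calc W (Fin.castLE (Nat.min_le_left m n) i) (Fin.castLE (Nat.min_le_right m n) i) * σ k ω i
        ≤ (1 / c) * σ k ω i := by
          refine mul_le_mul_of_nonneg_right ?_ hσi
          calc W _ _ ≤ |W _ _| := le_abs_self _
            _ ≤ ‖W‖ := Matrix.norm_entry_le_entrywise_sup_norm W
            _ ≤ 1 / c := hWnorm
      _ = σ k ω i / c := by ring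
  have hgood : ∀ k, ρ ≤ Z k ω →
      dualNorm N (grad (X k ω)) ^ 2 ≤ (a k)^2 / (ρ * c)^2 := by
    intro k hk
    have hs0 : 0 ≤ ∑ i, σ k ω i := Finset.sum_nonneg fun i _ => le_of_lt (hσ k ω i)
    have hge : ρ * (∑ i, σ k ω i) ≤ a k := by
      rw [ha_eq k, Finset.mul_sum]
      refine Finset.sum_le_sum fun i _ => ?_
      have h1 : ρ ≤ E k ω i / N (rectDiag m n (E k ω)) := by
        refine le_trans hk ?_
        have h2 : Z k ω = (Finset.univ.inf' Finset.univ_nonempty (E k ω))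
            / N (rectDiag m n (E k ω)) := rfl
        rw [h2]
        gcongr
        · exact le_of_lt (hND k)
        · exact Finset.inf'_le _ (Finset.mem_univ i)
      calc ρ * σ k ω i = σ k ω i * ρ := mul_comm _ _
        _ ≤ σ k ω i * (E k ω i / N (rectDiag m n (E k ω))) :=
            mul_le_mul_of_nonneg_left h1 (le_of_lt (hσ k ω i))
    have hd := hdual_le k
    have hd0 : 0 ≤ dualNorm N (grad (X k ω)) := dualNorm_nonneg hN_smul hN_def hc hcle _
    have h2 : dualNorm N (grad (X k ω)) ≤ a k / (ρ * c) := by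
      have h3 : (∑ i, σ k ω i) ≤ a k / ρ := by
        rw [le_div_iff₀ hρ]
        linarith [hge, mul_comm ρ (∑ i, σ k ω i)]
      calc dualNorm N (grad (X k ω)) ≤ (∑ i, σ k ω i) / c := hd
        _ ≤ (a k / ρ) / c := by gcongr
        _ = a k / (ρ * c) := by rw [div_div]
    calc dualNorm N (grad (X k ω)) ^ 2 ≤ (a k / (ρ * c)) ^ 2 := pow_le_pow_left₀ hd0 h2 2
      _ = (a k)^2 / (ρ * c)^2 := div_pow _ _ 2
  -- conclusion
  have hq2 : q / 2 < q := by linarith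
  have hev : ∀ᶠ K : ℕ in atTop, q / 2 ≤ (∑ i ∈ Finset.range K, Y i ω) / K :=
    hlim.eventually (eventually_ge_nhds hq2)
  obtain ⟨K₀, hK₀⟩ := Filter.eventually_atTop.mp hev
  set B : ℝ := (f X0 - fmin) / κ with hBdef
  have hB0 : 0 ≤ B := div_nonneg (by linarith [hfmin X0]) (le_of_lt hκ)
  set g0 : ℝ := dualNorm N (grad X0) ^ 2 with hg0def
  have hg00 : 0 ≤ g0 := sq_nonneg _
  refine ⟨max (2 * B / (q * (ρ * c)^2)) ((K₀ : ℝ) * g0), fun K hK => ?_⟩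
  have hKpos : (0:ℝ) < K := by exact_mod_cast lt_of_lt_of_le zero_lt_one hK
  rcases lt_or_ge K K₀ with hKlt | hKge
  · refine ⟨0, lt_of_lt_of_le Nat.one_pos hK, ?_⟩
    rw [hX0 ω, le_div_iff₀ hKpos]
    calc g0 * K ≤ g0 * K₀ := by
          have : (K : ℝ) ≤ K₀ := by exact_mod_cast le_of_lt hKlt
          nlinarith
      _ = (K₀ : ℝ) * g0 := mul_comm _ _
      _ ≤ max (2 * B / (q * (ρ * c)^2)) ((K₀ : ℝ) * g0) := le_max_right _ _
  · have hcount := hK₀ K hKge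
    set S : Finset ℕ := (Finset.range K).filter (fun k => ρ ≤ Z k ω) with hSdef
    have hcard : (∑ i ∈ Finset.range K, Y i ω) = S.card := by
      calc (∑ i ∈ Finset.range K, Y i ω)
          = ∑ i ∈ Finset.range K, (if ρ ≤ Z i ω then (1:ℝ) else 0) := by
            refine Finset.sum_congr rfl fun i _ => ?_
            simp [hYdef, hθdef, Set.indicator_apply]
        _ = S.card := by rw [Finset.sum_boole, hSdef]
    rw [hcard] at hcount
    have hScard : q / 2 * K ≤ S.card := by
      rw [le_div_iff₀ hKpos] at hcount
      exact hcount
    have hSpos : 0 < (S.card : ℝ) := lt_of_lt_of_le (by positivity) hScard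
    have hSne : S.Nonempty := Finset.card_pos.mp (by exact_mod_cast hSpos)
    have hsum_le : ∑ k ∈ S, (a k)^2 ≤ B := by
      refine le_trans (Finset.sum_le_sum_of_subset_of_nonneg (Finset.filter_subset _ _)
        (fun k _ _ => sq_nonneg (a k))) ?_
      rw [hBdef, le_div_iff₀ hκ, mul_comm]
      exact hsum K
    have havg : ∑ k ∈ S, (a k)^2 ≤ ∑ k ∈ S, B / S.card := by
      rw [Finset.sum_const, nsmul_eq_mul, mul_div_cancel₀ _ (ne_of_gt hSpos)]
      exact hsum_le
    obtain ⟨k, hkS, hk⟩ := Finset.exists_le_of_sum_le hSne havg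
    rw [hSdef, Finset.mem_filter, Finset.mem_range] at hkS
    refine ⟨k, hkS.1, ?_⟩
    have h1 := hgood k hkS.2
    have hρc : (0:ℝ) < (ρ * c)^2 := by positivity
    have h2 : (a k)^2 / (ρ * c)^2 ≤ (B / S.card) / (ρ * c)^2 := by gcongr
    have h3 : (B / S.card) / (ρ * c)^2 ≤ (B / (q / 2 * K)) / (ρ * c)^2 := by
      gcongr
    have h4 : (B / (q / 2 * K)) / (ρ * c)^2 = (2 * B / (q * (ρ * c)^2)) / K :=
      div_div_half_eq B q ((ρ * c)^2) K hqpos hρc hKpos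
    have h5 : (2 * B / (q * (ρ * c)^2)) / K
        ≤ max (2 * B / (q * (ρ * c)^2)) ((K₀ : ℝ) * g0) / K := by
      gcongr
      exact le_max_left _ _
    exact h1.trans (h2.trans (h3.trans (h4.le.trans h5)))
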